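/- Let Y be a measurable space in which singletons are measurable and which contains at least three points, and let K be a Markov kernel from Y to Y. Then for every γ ≥ 1, the contraction coefficient of K under E_γ-divergence satisfies η_γ(K) = sup over pairs y₁, y₂ ∈ Y of E_γ(K(y₁)‖K(y₂)). -/

import Mathlib

open MeasureTheory ProbabilityTheory Real

noncomputable def Egamma {Y : Type*} [MeasurableSpace Y] (γ : ℝ) (P Q : Measure Y) : ℝ :=
  ⨆ A : {A : Set Y // MeasurableSet A}, ((P A.1).toReal - γ * (Q A.1).toReal)

noncomputable def etaGamma {Y : Type*} [MeasurableSpace Y] (γ : ℝ) (K : Kernel Y Y) : ℝ :=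
  ⨆ p : {p : Measure Y × Measure Y //
      IsProbabilityMeasure p.1 ∧ IsProbabilityMeasure p.2 ∧ Egamma γ p.1 p.2 ≠ 0},
    Egamma γ (p.1.1.bind K) (p.1.2.bind K) / Egamma γ p.1.1 p.1.2

section aux
variable {Y : Type*} [MeasurableSpace Y] {γ : ℝ} {P Q : Measure Y}

instance : Nonempty {A : Set Y // MeasurableSet A} := ⟨⟨∅, MeasurableSet.empty⟩⟩

lemma Egamma_le {r : ℝ}
    (h : ∀ A : Set Y, MeasurableSet A → (P A).toReal - γ * (Q A).toReal ≤ r) :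
    Egamma γ P Q ≤ r := ciSup_le fun A => h A.1 A.2

lemma bddAbove_Egamma (hγ : 0 ≤ γ) [IsProbabilityMeasure P] :
    BddAbove (Set.range fun A : {A : Set Y // MeasurableSet A} =>
      (P A.1).toReal - γ * (Q A.1).toReal) := by
  refine ⟨1, ?_⟩
  rintro x ⟨A, rfl⟩
  have h1 : (P A.1).toReal ≤ 1 := by
    have := prob_le_one (μ := P) (s := A.1)
    simpa using ENNReal.toReal_le_of_le_ofReal one_pos.le (by simpa using this)
  have h2 : 0 ≤ γ * (Q A.1).toReal := mul_nonneg hγ ENNReal.toReal_nonneg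
  dsimp; linarith

lemma le_Egamma (hγ : 0 ≤ γ) [IsProbabilityMeasure P] {A : Set Y} (hA : MeasurableSet A) :
    (P A).toReal - γ * (Q A).toReal ≤ Egamma γ P Q := by
  have := le_ciSup (f := fun A : {A : Set Y // MeasurableSet A} =>
    (P A.1).toReal - γ * (Q A.1).toReal) (bddAbove_Egamma (P := P) (Q := Q) hγ) ⟨A, hA⟩
  simpa [Egamma] using this

lemma Egamma_nonneg (hγ : 0 ≤ γ) [IsProbabilityMeasure P] : 0 ≤ Egamma γ P Q := by
  have := le_Egamma (P := P) (Q := Q) hγ (MeasurableSet.empty (α := Y))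
  simpa using this

lemma Egamma_le_one (hγ : 0 ≤ γ) [IsProbabilityMeasure P] : Egamma γ P Q ≤ 1 := by
  refine Egamma_le fun A hA => ?_
  have h1 : (P A).toReal ≤ 1 := by
    have := prob_le_one (μ := P) (s := A)
    simpa using ENNReal.toReal_le_of_le_ofReal one_pos.le (by simpa using this)
  have h2 : 0 ≤ γ * (Q A).toReal := mul_nonneg hγ ENNReal.toReal_nonneg
  linarith

lemma exists_hahn (hγ : 0 ≤ γ) (P Q : Measure Y) [IsProbabilityMeasure P]
    [IsProbabilityMeasure Q] :
    ∃ S : Set Y, MeasurableSet S ∧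
      Egamma γ P Q = (P S).toReal - γ * (Q S).toReal ∧
      ((ENNReal.ofReal γ • Q).restrict S ≤ P.restrict S) ∧
      (P.restrict Sᶜ ≤ (ENNReal.ofReal γ • Q).restrict Sᶜ) := by
  set ν' : Measure Y := ENNReal.ofReal γ • Q with hν'
  haveI : IsFiniteMeasure ν' := by
    constructor
    rw [hν', Measure.smul_apply, smul_eq_mul]
    exact ENNReal.mul_lt_top ENNReal.ofReal_lt_top (measure_lt_top Q _)
  set s : SignedMeasure Y := P.toSignedMeasure - ν'.toSignedMeasure with hs
  have hν'app : ∀ A : Set Y, (ν' A).toReal = γ * (Q A).toReal := by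
    intro A
    rw [hν', Measure.smul_apply, smul_eq_mul, ENNReal.toReal_mul, ENNReal.toReal_ofReal hγ]
  have hsapp : ∀ A : Set Y, MeasurableSet A → s A = (P A).toReal - γ * (Q A).toReal := by
    intro A hA
    rw [hs, VectorMeasure.sub_apply, Measure.toSignedMeasure_apply_measurable hA,
      Measure.toSignedMeasure_apply_measurable hA, measureReal_def, measureReal_def, hν'app]
  obtain ⟨S, hS, hpos, hneg⟩ := s.exists_compl_positive_negative
  have hposS : ∀ j : Set Y, MeasurableSet j → j ⊆ S → 0 ≤ s j := by
    intro j hj hjS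
    have := (VectorMeasure.restrict_le_restrict_iff 0 s hS).mp hpos hj hjS
    simpa using this
  have hnegS : ∀ j : Set Y, MeasurableSet j → j ⊆ Sᶜ → s j ≤ 0 := by
    intro j hj hjS
    have := (VectorMeasure.restrict_le_restrict_iff s 0 hS.compl).mp hneg hj hjS
    simpa using this
  refine ⟨S, hS, ?_, ?_, ?_⟩
  · -- Egamma = value at S
    refine le_antisymm (Egamma_le fun A hA => ?_) ?_
    · rw [← hsapp A hA, ← hsapp S hS]
      have h1 : s A = s (A ∩ S) + s (A \ S) := by
        rw [← VectorMeasure.of_union (Set.disjoint_of_subset_left Set.inter_subset_right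
          Set.disjoint_sdiff_right) (hA.inter hS) (hA.diff hS)]
        · congr 1
          rw [Set.inter_union_diff]
      have h2 : s S = s (A ∩ S) + s (S \ A) := by
        rw [← VectorMeasure.of_union (Set.disjoint_of_subset_left Set.inter_subset_left
          Set.disjoint_sdiff_right) (hA.inter hS) (hS.diff hA)]
        · congr 1
          rw [Set.inter_comm, Set.inter_union_diff]
      have h3 : s (A \ S) ≤ 0 := hnegS _ (hA.diff hS) (Set.diff_subset_compl A S)
      have h4 : 0 ≤ s (S \ A) := hposS _ (hS.diff hA) Set.diff_subset
      linarith
    · exact le_Egamma hγ hS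
  · rw [Measure.le_iff]
    intro E hE
    rw [Measure.restrict_apply hE, Measure.restrict_apply hE]
    have h0 := hposS _ (hE.inter hS) Set.inter_subset_right
    rw [hsapp _ (hE.inter hS)] at h0
    have := hν'app (E ∩ S)
    refine (ENNReal.toReal_le_toReal (measure_ne_top _ _) (measure_ne_top _ _)).mp ?_
    rw [this]; linarith
  · rw [Measure.le_iff]
    intro E hE
    rw [Measure.restrict_apply hE, Measure.restrict_apply hE]
    have h0 := hnegS _ (hE.inter hS.compl) Set.inter_subset_right
    rw [hsapp _ (hE.inter hS.compl)] at h0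
    have := hν'app (E ∩ Sᶜ)
    refine (ENNReal.toReal_le_toReal (measure_ne_top _ _) (measure_ne_top _ _)).mp ?_
    rw [this]; linarith

lemma isProbabilityMeasure_bind (μ : Measure Y) [IsProbabilityMeasure μ]
    (K : Kernel Y Y) [IsMarkovKernel K] : IsProbabilityMeasure (μ.bind K) := by
  constructor
  rw [Measure.bind_apply MeasurableSet.univ K.measurable.aemeasurable]
  simp

lemma core [Nonempty Y] (hγ : 1 ≤ γ) (K : Kernel Y Y) [IsMarkovKernel K]
    (μ ν : Measure Y) [IsProbabilityMeasure μ] [IsProbabilityMeasure ν] {r : ℝ}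
    (hr : ∀ y1 y2 : Y, Egamma γ (K y1) (K y2) ≤ r) :
    Egamma γ (μ.bind K) (ν.bind K) ≤ r * Egamma γ μ ν := by
  have hγ0 : (0:ℝ) ≤ γ := le_trans zero_le_one hγ
  have hγpos : (0:ℝ) < γ := lt_of_lt_of_le one_pos hγ
  haveI := isProbabilityMeasure_bind μ K
  haveI := isProbabilityMeasure_bind ν K
  haveI hfin : IsFiniteMeasure (ENNReal.ofReal γ • ν) := by
    constructor
    rw [Measure.smul_apply, smul_eq_mul]
    exact ENNReal.mul_lt_top ENNReal.ofReal_lt_top (measure_lt_top ν _)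
  obtain ⟨B, hB, hEB, -, -⟩ := exists_hahn hγ0 (μ.bind K) (ν.bind K)
  obtain ⟨S, hS, hES, hSpos, hSneg⟩ := exists_hahn hγ0 μ ν
  set g : Y → ℝ := fun y => (K y B).toReal with hg
  have hgmeas : Measurable g := (K.measurable_coe hB).ennreal_toReal
  have hg0 : ∀ y, 0 ≤ g y := fun y => ENNReal.toReal_nonneg
  have hg1 : ∀ y, g y ≤ 1 := by
    intro y
    have h := prob_le_one (μ := K y) (s := B)
    simpa using ENNReal.toReal_mono ENNReal.one_ne_top h
  -- integrability
  have hgint : ∀ (ρ : Measure Y) [IsFiniteMeasure ρ], Integrable g ρ := by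
    intro ρ _
    refine (integrable_const (1:ℝ)).mono' hgmeas.aestronglyMeasurable ?_
    exact ae_of_all _ fun y => by
      rw [Real.norm_eq_abs, abs_of_nonneg (hg0 y)]; exact hg1 y
  -- numerator as integrals
  have hbind : ∀ (ρ : Measure Y) [IsProbabilityMeasure ρ],
      ((ρ.bind K) B).toReal = ∫ y, g y ∂ρ := by
    intro ρ _
    rw [Measure.bind_apply hB K.measurable.aemeasurable]
    rw [integral_toReal (K.measurable_coe hB).aemeasurable
      (ae_of_all _ fun y => measure_lt_top _ _)]
  -- sup and inf of g
  set M : ℝ := ⨆ y, g y with hM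
  set m : ℝ := ⨅ y, g y with hm
  have hbddA : BddAbove (Set.range g) := ⟨1, by rintro x ⟨y, rfl⟩; exact hg1 y⟩
  have hbddB : BddBelow (Set.range g) := ⟨0, by rintro x ⟨y, rfl⟩; exact hg0 y⟩
  have hMg : ∀ y, g y ≤ M := fun y => le_ciSup hbddA y
  have hmg : ∀ y, m ≤ g y := fun y => ciInf_le hbddB y
  have hm0 : 0 ≤ m := le_ciInf hg0
  have hrM : M - γ * m ≤ r := by
    have h1 : ∀ y1, g y1 ≤ γ * m + r := by
      intro y1
      have h2 : ∀ y2, (g y1 - r) / γ ≤ g y2 := by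
        intro y2
        have h3 : g y1 - γ * g y2 ≤ r :=
          le_trans (le_Egamma (P := K y1) (Q := K y2) hγ0 hB) (hr y1 y2)
        rw [div_le_iff₀ hγpos]; linarith [mul_comm γ (g y2)]
      have h4 : (g y1 - r) / γ ≤ m := le_ciInf h2
      rw [div_le_iff₀ hγpos] at h4; linarith [mul_comm γ m]
    have := ciSup_le h1
    linarith [this]
  -- the two restriction estimates
  have T1 : γ * ∫ x in S, (M - g x) ∂ν ≤ ∫ x in S, (M - g x) ∂μ := by
    have hmono : ∫ x, (M - g x) ∂((ENNReal.ofReal γ • ν).restrict S)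
        ≤ ∫ x, (M - g x) ∂(μ.restrict S) := by
      refine integral_mono_measure hSpos (ae_of_all _ fun y => by simp [hMg y]) ?_
      exact ((integrable_const M).sub (hgint μ)).restrict
    rwa [Measure.restrict_smul, integral_smul_measure, ENNReal.toReal_ofReal hγ0,
      smul_eq_mul] at hmono
  have T2 : ∫ x in Sᶜ, (g x - m) ∂μ ≤ γ * ∫ x in Sᶜ, (g x - m) ∂ν := by
    have hmono : ∫ x, (g x - m) ∂(μ.restrict Sᶜ)
        ≤ ∫ x, (g x - m) ∂((ENNReal.ofReal γ • ν).restrict Sᶜ) := by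
      refine integral_mono_measure hSneg (ae_of_all _ fun y => by simp [hmg y]) ?_
      exact ((hgint (ENNReal.ofReal γ • ν)).restrict).sub (integrable_const m)
    rwa [Measure.restrict_smul, integral_smul_measure, ENNReal.toReal_ofReal hγ0,
      smul_eq_mul] at hmono
  -- expand the set integrals
  have hexp : ∀ (ρ : Measure Y) [IsProbabilityMeasure ρ], ∀ (T : Set Y) (c : ℝ),
      ∫ x in T, (c - g x) ∂ρ = c * (ρ T).toReal - ∫ x in T, g x ∂ρ := by
    intro ρ _ T c
    rw [integral_sub (integrable_const c) ((hgint ρ).restrict), integral_const,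
      measureReal_def, Measure.restrict_apply_univ, smul_eq_mul, mul_comm]
  have hexp' : ∀ (ρ : Measure Y) [IsProbabilityMeasure ρ], ∀ (T : Set Y) (c : ℝ),
      ∫ x in T, (g x - c) ∂ρ = ∫ x in T, g x ∂ρ - c * (ρ T).toReal := by
    intro ρ _ T c
    rw [integral_sub ((hgint ρ).restrict) (integrable_const c), integral_const,
      measureReal_def, Measure.restrict_apply_univ, smul_eq_mul, mul_comm]
  rw [hexp μ S M, hexp ν S M] at T1
  rw [hexp' μ Sᶜ m, hexp' ν Sᶜ m] at T2
  -- abbreviations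
  set a := (μ S).toReal
  set b := (ν S).toReal
  set a' := (μ Sᶜ).toReal
  set b' := (ν Sᶜ).toReal
  have haa' : a + a' = 1 := by
    have h := measure_add_measure_compl (μ := μ) hS
    have := congrArg ENNReal.toReal h
    rwa [ENNReal.toReal_add (measure_ne_top _ _) (measure_ne_top _ _),
      measure_univ, ENNReal.toReal_one] at this
  have hbb' : b + b' = 1 := by
    have h := measure_add_measure_compl (μ := ν) hS
    have := congrArg ENNReal.toReal h
    rwa [ENNReal.toReal_add (measure_ne_top _ _) (measure_ne_top _ _),
      measure_univ, ENNReal.toReal_one] at this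
  -- splitting
  have hsplitμ : ∫ x in S, g x ∂μ + ∫ x in Sᶜ, g x ∂μ = ∫ x, g x ∂μ :=
    integral_add_compl hS (hgint μ)
  have hsplitν : ∫ x in S, g x ∂ν + ∫ x in Sᶜ, g x ∂ν = ∫ x, g x ∂ν :=
    integral_add_compl hS (hgint ν)
  set c := Egamma γ μ ν
  have hc0 : 0 ≤ c := Egamma_nonneg hγ0
  have hc1 : c ≤ 1 := Egamma_le_one hγ0
  -- numerator via the set B
  have hnum : Egamma γ (μ.bind K) (ν.bind K) = ∫ y, g y ∂μ - γ * ∫ y, g y ∂ν := by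
    rw [hEB, hbind μ, hbind ν]
  rw [hnum]
  have hcval : c = a - γ * b := hES
  have ha' : a' = 1 - a := by linarith
  have hb' : b' = 1 - b := by linarith
  have e1 : M * c = M * a - γ * (M * b) := by rw [hcval]; ring
  have e2 : m * ((1 - γ) - c) = m * a' - γ * (m * b') := by
    rw [hcval, ha', hb']; ring
  have hsplitν' : γ * ∫ x in S, g x ∂ν + γ * ∫ x in Sᶜ, g x ∂ν = γ * ∫ x, g x ∂ν := by
    rw [← hsplitν]; ring
  have hint1 : 0 ≤ m * (γ - 1) * (1 - c) :=
    mul_nonneg (mul_nonneg hm0 (by linarith)) (by linarith)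
  have hint2 : 0 ≤ (r - (M - γ * m)) * c :=
    mul_nonneg (by linarith) hc0
  nlinarith [T1, T2, e1, e2, hsplitμ, hsplitν', hint1, hint2]

lemma Egamma_dirac_eq_one [MeasurableSingletonClass Y] (hγ : 0 ≤ γ) {x z : Y} (hxz : x ≠ z) :
    Egamma γ (Measure.dirac x) (Measure.dirac z) = 1 := by
  refine le_antisymm (Egamma_le_one hγ) ?_
  have h := le_Egamma (P := Measure.dirac x) (Q := Measure.dirac z) hγ
    (measurableSet_singleton x)
  have h1 : (Measure.dirac x) {x} = 1 := by simp
  have h2 : (Measure.dirac z) {x} = 0 := by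
    rw [Measure.dirac_apply]
    simp [Set.indicator, Ne.symm hxz]
  rw [h1, h2] at h
  simpa using h

end aux

/-- For a Markov kernel `K` on a measurable space `Y` with measurable
singletons and at least three points, the contraction coefficient of `K` under the
`E_γ`-divergence equals the supremum of `E_γ(K(y₁) ‖ K(y₂))` over pairs `y₁, y₂ ∈ Y`. -/
theorem contraction_coeff_Egamma_eq_sup {Y : Type*} [MeasurableSpace Y]
    [MeasurableSingletonClass Y]
    (hY : ∃ a b c : Y, a ≠ b ∧ a ≠ c ∧ b ≠ c)
    (K : Kernel Y Y) [IsMarkovKernel K] (γ : ℝ) (hγ : 1 ≤ γ) :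
    etaGamma γ K = ⨆ p : Y × Y, Egamma γ (K p.1) (K p.2) := by
  obtain ⟨a, b, -, hab, -, -⟩ := hY
  haveI : Nonempty Y := ⟨a⟩
  have hγ0 : (0:ℝ) ≤ γ := le_trans zero_le_one hγ
  have hbddR : BddAbove (Set.range fun p : Y × Y => Egamma γ (K p.1) (K p.2)) := by
    refine ⟨1, ?_⟩
    rintro x ⟨p, rfl⟩
    exact Egamma_le_one hγ0
  haveI hnonempty : Nonempty {p : Measure Y × Measure Y //
      IsProbabilityMeasure p.1 ∧ IsProbabilityMeasure p.2 ∧ Egamma γ p.1 p.2 ≠ 0} := by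
    refine ⟨⟨(Measure.dirac a, Measure.dirac b), inferInstance, inferInstance, ?_⟩⟩
    rw [Egamma_dirac_eq_one hγ0 hab]
    exact one_ne_zero
  have hratio01 : ∀ p : {p : Measure Y × Measure Y //
      IsProbabilityMeasure p.1 ∧ IsProbabilityMeasure p.2 ∧ Egamma γ p.1 p.2 ≠ 0},
      0 ≤ Egamma γ (p.1.1.bind K) (p.1.2.bind K) / Egamma γ p.1.1 p.1.2 ∧
      Egamma γ (p.1.1.bind K) (p.1.2.bind K) / Egamma γ p.1.1 p.1.2 ≤ 1 := by
    rintro ⟨⟨μ, ν⟩, h1, h2, hne0⟩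
    haveI := h1; haveI := h2
    haveI := isProbabilityMeasure_bind μ K
    have hcpos : 0 < Egamma γ μ ν := lt_of_le_of_ne (Egamma_nonneg hγ0) (Ne.symm hne0)
    constructor
    · exact div_nonneg (Egamma_nonneg hγ0) hcpos.le
    · rw [div_le_one hcpos]
      have := core hγ K μ ν (r := 1) (fun y1 y2 => Egamma_le_one hγ0)
      simpa using this
  have hbddEta : BddAbove (Set.range fun p : {p : Measure Y × Measure Y //
      IsProbabilityMeasure p.1 ∧ IsProbabilityMeasure p.2 ∧ Egamma γ p.1 p.2 ≠ 0} =>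
      Egamma γ (p.1.1.bind K) (p.1.2.bind K) / Egamma γ p.1.1 p.1.2) := by
    refine ⟨1, ?_⟩
    rintro x ⟨p, rfl⟩
    exact (hratio01 p).2
  have hEta0 : 0 ≤ etaGamma γ K := by
    obtain ⟨p0⟩ := hnonempty
    have hle := le_ciSup (f := fun p : {p : Measure Y × Measure Y //
      IsProbabilityMeasure p.1 ∧ IsProbabilityMeasure p.2 ∧ Egamma γ p.1 p.2 ≠ 0} =>
      Egamma γ (p.1.1.bind K) (p.1.2.bind K) / Egamma γ p.1.1 p.1.2) hbddEta p0
    rw [etaGamma]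
    exact le_trans (hratio01 p0).1 hle
  refine le_antisymm ?_ ?_
  · -- etaGamma ≤ sup
    rw [etaGamma]
    refine ciSup_le ?_
    rintro ⟨⟨μ, ν⟩, h1, h2, hne0⟩
    haveI := h1; haveI := h2
    have hcpos : 0 < Egamma γ μ ν := lt_of_le_of_ne (Egamma_nonneg hγ0) (Ne.symm hne0)
    rw [div_le_iff₀ hcpos]
    have hr : ∀ y1 y2 : Y, Egamma γ (K y1) (K y2) ≤ ⨆ p : Y × Y, Egamma γ (K p.1) (K p.2) :=
      fun y1 y2 => le_ciSup (f := fun p : Y × Y => Egamma γ (K p.1) (K p.2)) hbddR (y1, y2)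
    have := core hγ K μ ν hr
    simpa [mul_comm] using this
  · -- sup ≤ etaGamma
    refine ciSup_le ?_
    intro p
    by_cases hp : p.1 = p.2
    · refine le_trans ?_ hEta0
      refine Egamma_le fun A hA => ?_
      rw [hp]
      have h1 : ((K p.2) A).toReal ≤ γ * ((K p.2) A).toReal := by
        nlinarith [ENNReal.toReal_nonneg (a := (K p.2) A)]
      linarith
    · set q : {p : Measure Y × Measure Y //
          IsProbabilityMeasure p.1 ∧ IsProbabilityMeasure p.2 ∧ Egamma γ p.1 p.2 ≠ 0} :=
        ⟨(Measure.dirac p.1, Measure.dirac p.2), inferInstance, inferInstance, by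
          rw [Egamma_dirac_eq_one hγ0 hp]; exact one_ne_zero⟩ with hq
      have hle := le_ciSup (f := fun p : {p : Measure Y × Measure Y //
        IsProbabilityMeasure p.1 ∧ IsProbabilityMeasure p.2 ∧ Egamma γ p.1 p.2 ≠ 0} =>
        Egamma γ (p.1.1.bind K) (p.1.2.bind K) / Egamma γ p.1.1 p.1.2) hbddEta q
    
      have hval : Egamma γ (q.1.1.bind K) (q.1.2.bind K) / Egamma γ q.1.1 q.1.2
          = Egamma γ (K p.1) (K p.2) := by
        rw [hq]
        simp only
        rw [Measure.dirac_bind K.measurable, Measure.dirac_bind K.measurable,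
          Egamma_dirac_eq_one hγ0 hp, div_one]
      rw [etaGamma]
      rw [hval] at hle
      exact hle
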